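/- arXiv:1404.4647 — 2 statements merged into one kernel-verified Lean document; each statement's English description precedes it below -/
import Mathlib

section
/- Let W be a Coxeter group with simple reflections S, let α ∈ S, and let N(α) be the set of simple reflections t ∈ S with t ≠ α that do not commute with α. Let S_P = S \ {α} and S_R = S \ (N(α) ∪ {α}). Then for every w ∈ W_P that is a minimal-length representative with respect to W_R (i.e., l(wt) > l(w) for all t ∈ S_R), the element w·α satisfies l(w·α·t) > l(w·α) for all t ∈ S_P. In other words, W_P^R · α ⊆ W^P. -/
/-!
STATEMENT 3: Let `W` be a Coxeter group with simple reflections indexed by `B`,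
`α ∈ B`, `N(α)` the set of simple reflections distinct from `s α` not commuting with
`s α`, `S_P = S \ {α}` and `S_R = S \ (N(α) ∪ {α})`. Then for every `w ∈ W_P` with
`ℓ(w t) > ℓ(w)` for all `t ∈ S_R` (i.e. `w ∈ W_P^R`), the element `w * s α` satisfies
`ℓ(w * s α * t) > ℓ(w * s α)` for all `t ∈ S_P`; i.e. `W_P^R · s α ⊆ W^P`.
-/

open CoxeterSystem

open List

namespace Stmt3Aux

private lemma trigL1 (u θ : ℝ) :
    Real.sin (u + θ) = 2 * Real.cos θ * Real.sin u - Real.sin (u - θ) := by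
  rw [Real.sin_add, Real.sin_sub]; ring

private lemma trigL2 (u θ : ℝ) :
    Real.sin (u + 2*θ) = (4 * Real.cos θ ^ 2 - 1) * Real.sin u
      - 2 * Real.cos θ * Real.sin (u - θ) := by
  rw [Real.sin_add, Real.sin_sub, Real.cos_two_mul, Real.sin_two_mul]; ring

variable {B : Type*} (M : CoxeterMatrix B)

noncomputable def kk (i j : B) : ℝ := - Real.cos (Real.pi / (M i j))

lemma kk_diag (i : B) : kk M i i = 1 := by
  simp [kk, M.diagonal i]

lemma kk_symm (i j : B) : kk M i j = kk M j i := by rw [kk, kk, M.symmetric]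

noncomputable def bi (i : B) : (B →₀ ℝ) →ₗ[ℝ] ℝ :=
  Finsupp.linearCombination ℝ (fun j => kk M i j)

lemma bi_single (i j : B) : bi M i (Finsupp.single j 1) = kk M i j := by
  simp [bi]

noncomputable def sig (i : B) : Module.End ℝ (B →₀ ℝ) :=
  LinearMap.id - LinearMap.smulRight ((2:ℝ) • bi M i) (Finsupp.single i 1)

lemma sig_apply (i : B) (v : B →₀ ℝ) :
    sig M i v = v - (2 * bi M i v) • Finsupp.single i 1 := by
  simp [sig, LinearMap.smulRight_apply, smul_smul]

lemma sig_sq (i : B) (v : B →₀ ℝ) : sig M i (sig M i v) = v := by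
  rw [sig_apply, sig_apply, map_sub, map_smul, bi_single, kk_diag]
  rw [smul_eq_mul, mul_one]
  module

lemma sig_mul_sig_pow (i j : B) (hij : i ≠ j) :
    (sig M i * sig M j) ^ (M i j) = 1 := by
  rcases Nat.eq_zero_or_pos (M i j) with h0 | hpos
  · rw [h0, pow_zero]
  have hm1 : M i j ≠ 1 := M.off_diagonal i j hij
  have hm2 : 2 ≤ M i j := by omega
  set m : ℕ := M i j with hm
  set θ : ℝ := Real.pi / m with hθ
  have hmR : (0:ℝ) < (m:ℝ) := by exact_mod_cast hpos
  have hθpos : 0 < θ := div_pos Real.pi_pos hmR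
  have h2m : (2:ℝ) ≤ (m:ℝ) := by exact_mod_cast hm2
  have hθlt : θ < Real.pi := by
    rw [hθ, div_lt_iff₀ hmR]
    nlinarith [Real.pi_pos, mul_le_mul_of_nonneg_left h2m (le_of_lt Real.pi_pos)]
  set c : ℝ := Real.cos θ with hc
  set s : ℝ := Real.sin θ with hsdef
  have hs : s ≠ 0 := ne_of_gt (Real.sin_pos_of_pos_of_lt_pi hθpos hθlt)
  have hkij : kk M i j = -c := by rw [kk, ← hm, ← hθ, hc]
  have hkji : kk M j i = -c := by rw [kk_symm]; exact hkij
  set T : Module.End ℝ (B →₀ ℝ) := sig M i * sig M j with hT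
  set eI : B →₀ ℝ := Finsupp.single i 1 with heI
  set eJ : B →₀ ℝ := Finsupp.single j 1 with heJ
  have biI : bi M i eI = 1 := by rw [heI, bi_single, kk_diag]
  have biJ : bi M j eJ = 1 := by rw [heJ, bi_single, kk_diag]
  have biIJ : bi M i eJ = -c := by rw [heJ, bi_single, hkij]
  have biJI : bi M j eI = -c := by rw [heI, bi_single, hkji]
  have hTI : T eI = (4*c^2 - 1) • eI + (2*c) • eJ := by
    simp only [hT, heI, heJ, Module.End.mul_apply, sig_apply, map_sub, map_smul,
      bi_single, kk_diag, hkij, hkji, smul_eq_mul]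
    module
  have hTJ : T eJ = (-(2*c)) • eI + (-1 : ℝ) • eJ := by
    simp only [hT, heI, heJ, Module.End.mul_apply, sig_apply, map_sub, map_smul,
      bi_single, kk_diag, hkij, hkji, smul_eq_mul]
    module
  have key : ∀ n : ℕ,
      (T ^ n) eI = (Real.sin ((2*n+1)*θ)/s) • eI + (Real.sin ((2*n)*θ)/s) • eJ ∧
      (T ^ n) eJ = (-(Real.sin ((2*n)*θ)/s)) • eI + (-(Real.sin ((2*n-1)*θ)/s)) • eJ := by
    intro n
    induction n with
    | zero =>
      constructor
      · rw [pow_zero]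
        norm_num [div_self hs]
        rw [← hsdef, div_self hs, one_smul]
      · rw [pow_zero]
        norm_num [Real.sin_neg, neg_div, div_self hs]
        rw [← hsdef, div_self hs, one_smul]
    | succ n ih =>
      obtain ⟨ih1, ih2⟩ := ih
      have e1 : Real.sin ((2*((n:ℝ)+1)+1)*θ)
          = (4*c^2-1) * Real.sin ((2*(n:ℝ)+1)*θ) - 2*c*Real.sin ((2*(n:ℝ))*θ) := by
        have h := trigL2 ((2*(n:ℝ)+1)*θ) θ
        rw [show (2*(n:ℝ)+1)*θ + 2*θ = (2*((n:ℝ)+1)+1)*θ by ring,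
          show (2*(n:ℝ)+1)*θ - θ = (2*(n:ℝ))*θ by ring, ← hc] at h
        exact h
      have e2 : Real.sin ((2*((n:ℝ)+1))*θ)
          = (4*c^2-1) * Real.sin ((2*(n:ℝ))*θ) - 2*c*Real.sin ((2*(n:ℝ)-1)*θ) := by
        have h := trigL2 ((2*(n:ℝ))*θ) θ
        rw [show (2*(n:ℝ))*θ + 2*θ = (2*((n:ℝ)+1))*θ by ring,
          show (2*(n:ℝ))*θ - θ = (2*(n:ℝ)-1)*θ by ring, ← hc] at h
        exact h
      have e3 : Real.sin ((2*((n:ℝ)+1))*θ)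
          = 2*c*Real.sin ((2*(n:ℝ)+1)*θ) - Real.sin ((2*(n:ℝ))*θ) := by
        have h := trigL1 ((2*(n:ℝ)+1)*θ) θ
        rw [show (2*(n:ℝ)+1)*θ + θ = (2*((n:ℝ)+1))*θ by ring,
          show (2*(n:ℝ)+1)*θ - θ = (2*(n:ℝ))*θ by ring, ← hc] at h
        exact h
      have e4 : Real.sin ((2*((n:ℝ)+1)-1)*θ)
          = 2*c*Real.sin ((2*(n:ℝ))*θ) - Real.sin ((2*(n:ℝ)-1)*θ) := by
        have h := trigL1 ((2*(n:ℝ))*θ) θ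
        rw [show (2*(n:ℝ))*θ + θ = (2*((n:ℝ)+1)-1)*θ by ring,
          show (2*(n:ℝ))*θ - θ = (2*(n:ℝ)-1)*θ by ring, ← hc] at h
        exact h
      have cA : Real.sin ((2*((n:ℝ)+1)+1)*θ)/s
          = (4*c^2-1) * (Real.sin ((2*(n:ℝ)+1)*θ)/s) - 2*c*(Real.sin ((2*(n:ℝ))*θ)/s) := by
        rw [e1]; ring
      have cB' : Real.sin ((2*((n:ℝ)+1))*θ)/s
          = (4*c^2-1) * (Real.sin ((2*(n:ℝ))*θ)/s) - 2*c*(Real.sin ((2*(n:ℝ)-1)*θ)/s) := by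
        rw [e2]; ring
      have cB : Real.sin ((2*((n:ℝ)+1))*θ)/s
          = 2*c*(Real.sin ((2*(n:ℝ)+1)*θ)/s) - Real.sin ((2*(n:ℝ))*θ)/s := by
        rw [e3]; ring
      have cC : Real.sin ((2*((n:ℝ)+1)-1)*θ)/s
          = 2*c*(Real.sin ((2*(n:ℝ))*θ)/s) - Real.sin ((2*(n:ℝ)-1)*θ)/s := by
        rw [e4]; ring
      constructor
      · rw [pow_succ, Module.End.mul_apply, hTI, map_add, map_smul, map_smul, ih1, ih2]
        push_cast
        rw [cA, cB']
        module
      · rw [pow_succ, Module.End.mul_apply, hTJ, map_add, map_smul, map_smul, ih1, ih2]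
        push_cast
        rw [cB, cC]
        module
  have hmθ : (m:ℝ) * θ = Real.pi := by
    rw [hθ]; field_simp
  have hsin1 : Real.sin ((2*(m:ℝ)+1)*θ) = s := by
    rw [show (2*(m:ℝ)+1)*θ = θ + 2*((m:ℝ)*θ) by ring, hmθ, Real.sin_add_two_pi]
  have hsin2 : Real.sin ((2*(m:ℝ))*θ) = 0 := by
    rw [show (2*(m:ℝ))*θ = 2*((m:ℝ)*θ) by ring, hmθ, Real.sin_two_pi]
  have hsin3 : Real.sin ((2*(m:ℝ)-1)*θ) = -s := by
    rw [show (2*(m:ℝ)-1)*θ = 2*((m:ℝ)*θ) - θ by ring, hmθ, Real.sin_two_pi_sub]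
  have hTmI : (T ^ m) eI = eI := by
    rw [(key m).1, hsin1, hsin2, div_self hs]
    norm_num
  have hTmJ : (T ^ m) eJ = eJ := by
    rw [(key m).2, hsin2, hsin3, neg_div, div_self hs]
    norm_num
  -- general vector
  apply LinearMap.ext
  intro v
  rw [Module.End.one_apply]
  have hc2 : 1 - c^2 ≠ 0 := by
    have hss : s^2 = 1 - c^2 := Real.sin_sq θ
    rw [← hss]
    exact pow_ne_zero 2 hs
  set x : ℝ := bi M i v with hx
  set y : ℝ := bi M j v with hy
  set p : ℝ := (x + c*y)/(1-c^2) with hp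
  set q : ℝ := (y + c*x)/(1-c^2) with hq
  set u : B →₀ ℝ := v - p • eI - q • eJ with hu
  have hui : bi M i u = 0 := by
    rw [hu, map_sub, map_sub, map_smul, map_smul, biI, biIJ, ← hx, smul_eq_mul,
      smul_eq_mul, hp, hq]
    field_simp
    ring
  have huj : bi M j u = 0 := by
    rw [hu, map_sub, map_sub, map_smul, map_smul, biJI, biJ, ← hy, smul_eq_mul,
      smul_eq_mul, hp, hq]
    field_simp
    ring
  have hTu : T u = u := by
    rw [hT, Module.End.mul_apply, sig_apply M j, huj, mul_zero, zero_smul, sub_zero,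
      sig_apply M i, hui, mul_zero, zero_smul, sub_zero]
  have hTnu : ∀ N : ℕ, (T ^ N) u = u := by
    intro N
    induction N with
    | zero => rw [pow_zero, Module.End.one_apply]
    | succ n ih => rw [pow_succ, Module.End.mul_apply, hTu, ih]
  have hv : v = u + (p • eI + q • eJ) := by
    rw [hu]; abel
  rw [hv, map_add, map_add, map_smul, map_smul, hTnu m, hTmI, hTmJ]

lemma isLiftable_sig : M.IsLiftable (sig M) := by
  intro i j
  rcases eq_or_ne i j with rfl | hij
  · rw [M.diagonal, pow_one]
    apply LinearMap.ext
    intro v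
    rw [Module.End.mul_apply, sig_sq, Module.End.one_apply]
  · exact sig_mul_sig_pow M i j hij

lemma simple_injective {W : Type*} [Group W] (cs : CoxeterSystem M W) {i j : B}
    (h : cs.simple i = cs.simple j) : i = j := by
  by_contra hij
  have hφ := congrArg (cs.lift ⟨sig M, isLiftable_sig M⟩) h
  rw [CoxeterSystem.lift_apply_simple, CoxeterSystem.lift_apply_simple] at hφ
  have h2 := congrArg (fun f : Module.End ℝ (B →₀ ℝ) => (f (Finsupp.single i 1)) i) hφ
  simp only [sig_apply, bi_single, kk_diag, Finsupp.sub_apply, Finsupp.smul_apply,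
    Finsupp.single_eq_same, smul_eq_mul] at h2
  rw [Finsupp.single_eq_of_ne hij] at h2
  norm_num at h2



private lemma zmod2_add_self (a : ZMod 2) : a + a = 0 := by
  rw [← two_mul, show (2 : ZMod 2) = 0 by decide, zero_mul]

private lemma sum_double (f : ℕ → ZMod 2) (m : ℕ) :
    ∑ r ∈ Finset.range m, (f (2*r) + f (2*r+1)) = ∑ q ∈ Finset.range (2*m), f q := by
  induction m with
  | zero => simp
  | succ n ih =>
    rw [Finset.sum_range_succ, ih, show 2*(n+1) = (2*n+1)+1 by ring,
      Finset.sum_range_succ, Finset.sum_range_succ, add_assoc]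

private lemma sum_period (f : ℕ → ZMod 2) (m : ℕ) (h : ∀ q, f (m + q) = f q) :
    ∑ q ∈ Finset.range (2*m), f q = 0 := by
  rw [two_mul, Finset.sum_range_add]
  rw [Finset.sum_congr rfl (fun q _ => h q)]
  exact zmod2_add_self _

variable {B : Type*} {M : CoxeterMatrix B} {W : Type*} [Group W]
variable (cs : CoxeterSystem M W)

lemma conj_eq_iff (g z t : W) : g * t * g⁻¹ = z ↔ t = g⁻¹ * z * g := by
  constructor
  · intro h; rw [← h]; group
  · intro h; rw [h]; group

variable [DecidableEq W]

local prefix:100 "s" => cs.simple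
local prefix:100 "π" => cs.wordProd

def etaFun (i : B) (p : W × ZMod 2) : W × ZMod 2 :=
  (s i * p.1 * s i, p.2 + if p.1 = s i then 1 else 0)

lemma etaFun_involutive (i : B) : Function.Involutive (etaFun cs i) := by
  rintro ⟨t, ε⟩
  unfold etaFun
  have hcond : (s i * t * s i = s i) ↔ (t = s i) := by
    constructor
    · intro h
      have := congrArg (fun z => s i * z * s i) h
      simpa [mul_assoc, cs.simple_mul_simple_self, cs.simple_mul_simple_cancel_left]
        using this
    · intro h
      rw [h, cs.simple_mul_simple_self, one_mul]
  simp only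
  rw [if_congr hcond rfl rfl]
  simp only [Prod.mk.injEq]
  constructor
  · simp [mul_assoc, cs.simple_mul_simple_self, cs.simple_mul_simple_cancel_left]
  · simp only [add_assoc, zmod2_add_self, add_zero]

def eta (i : B) : Equiv.Perm (W × ZMod 2) :=
  Function.Involutive.toPerm _ (etaFun_involutive cs i)

lemma eta_apply (i : B) (t : W) (ε : ZMod 2) :
    eta cs i (t, ε) = (s i * t * s i, ε + if t = s i then 1 else 0) := rfl

omit [DecidableEq W] in
lemma conj_pow (a b c : W) (h : c * a = b * c) : ∀ n : ℕ, c * a^n = b^n * c := by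
  intro n
  induction n with
  | zero => simp
  | succ n ih =>
    rw [pow_succ', pow_succ', ← mul_assoc, h, mul_assoc, ih, ← mul_assoc]

lemma isLiftable_eta : M.IsLiftable (eta cs) := by
  intro i j
  set x : W := s i * s j with hx
  set y : W := s j * s i with hy
  have hxinv : ∀ n : ℕ, (x^n)⁻¹ = y^n := by
    intro n
    rw [← inv_pow]
    congr 1
    rw [hx, hy, mul_inv_rev, cs.inv_simple, cs.inv_simple]
  have hyx : ∀ n : ℕ, s j * x^n = y^n * s j := by
    apply conj_pow
    rw [hx, hy, mul_assoc]
  have iter : ∀ (n : ℕ) (t : W) (ε : ZMod 2),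
      ((eta cs i * eta cs j)^n) (t, ε) = (x^n * t * (x^n)⁻¹,
        ε + ∑ r ∈ Finset.range n,
          ((if x^r * t * (x^r)⁻¹ = s j then 1 else 0) +
           (if s j * (x^r * t * (x^r)⁻¹) * s j = s i then (1 : ZMod 2) else 0))) := by
    intro n t ε
    induction n with
    | zero => simp
    | succ n ih =>
      rw [pow_succ', Equiv.Perm.mul_apply, ih, Equiv.Perm.mul_apply, eta_apply, eta_apply]
      refine Prod.ext ?_ ?_
      · show s i * (s j * (x ^ n * t * (x ^ n)⁻¹) * s j) * s i = x^(n+1) * t * (x^(n+1))⁻¹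
        rw [hxinv n, hxinv (n+1), pow_succ' x, pow_succ y, hx, hy]
        simp [mul_assoc]
      · show _ = ε + ∑ r ∈ Finset.range (n+1), _
        rw [Finset.sum_range_succ, ← add_assoc, ← add_assoc]
  have hxm : x ^ (M i j) = 1 := cs.simple_mul_simple_pow i j
  have hym : y ^ (M i j) = 1 := cs.simple_mul_simple_pow' i j
  apply Equiv.ext
  rintro ⟨t, ε⟩
  rw [iter (M i j) t ε, hxm]
  have hsum : ∑ r ∈ Finset.range (M i j),
      ((if x^r * t * (x^r)⁻¹ = s j then 1 else 0) +
       (if s j * (x^r * t * (x^r)⁻¹) * s j = s i then (1 : ZMod 2) else 0)) = 0 := by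
    have conv : ∀ r : ℕ,
        ((if x^r * t * (x^r)⁻¹ = s j then (1:ZMod 2) else 0) +
         (if s j * (x^r * t * (x^r)⁻¹) * s j = s i then (1:ZMod 2) else 0))
        = (if t = y^(2*r) * s j then (1:ZMod 2) else 0) +
          (if t = y^(2*r+1) * s j then (1:ZMod 2) else 0) := by
      intro r
      have v1 : (x^r)⁻¹ * s j * x^r = y^(2*r) * s j := by
        rw [hxinv r, mul_assoc, hyx r, ← mul_assoc, ← pow_add, two_mul]
      have c1 : (x^r * t * (x^r)⁻¹ = s j) ↔ (t = y^(2*r) * s j) := by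
        rw [conj_eq_iff, v1]
      have hrw : s j * (x^r * t * (x^r)⁻¹) * s j = (s j * x^r) * t * (s j * x^r)⁻¹ := by
        rw [mul_inv_rev, cs.inv_simple]
        simp [mul_assoc]
      have v2 : (s j * x^r)⁻¹ * s i * (s j * x^r) = y^(2*r+1) * s j := by
        rw [mul_inv_rev, cs.inv_simple, hxinv r, hyx r]
        rw [mul_assoc (y^r) (s j) (s i), ← hy, ← pow_succ, ← mul_assoc, ← pow_add]
        congr 2
        omega
      have c2 : (s j * (x^r * t * (x^r)⁻¹) * s j = s i) ↔ (t = y^(2*r+1) * s j) := by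
        rw [hrw, conj_eq_iff, v2]
      rw [if_congr c1 rfl rfl, if_congr c2 rfl rfl]
    rw [Finset.sum_congr rfl (fun r _ => conv r)]
    rw [sum_double (fun q => if t = y^q * s j then (1:ZMod 2) else 0)]
    apply sum_period
    intro q
    have : y ^ (M i j + q) = y ^ q := by rw [pow_add, hym, one_mul]
    rw [this]
  rw [hsum, add_zero]
  simp

noncomputable def phi0 : W →* Equiv.Perm (W × ZMod 2) :=
  cs.lift ⟨eta cs, isLiftable_eta cs⟩

lemma phi0_simple (i : B) : phi0 cs (s i) = eta cs i :=
  cs.lift_apply_simple (isLiftable_eta cs) i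

lemma phi0_wordProd (ω : List B) (t : W) (ε : ZMod 2) :
    phi0 cs (π ω) (t, ε)
      = (π ω * t * (π ω)⁻¹, ε + ((cs.rightInvSeq ω).count t : ZMod 2)) := by
  induction ω generalizing ε with
  | nil => simp
  | cons i ω ih =>
    rw [cs.wordProd_cons, map_mul, Equiv.Perm.mul_apply, ih, phi0_simple, eta_apply]
    have hris : cs.rightInvSeq (i :: ω)
        = ((π ω)⁻¹ * s i * π ω) :: cs.rightInvSeq ω := rfl
    have hcond : (π ω * t * (π ω)⁻¹ = s i) ↔ ((π ω)⁻¹ * s i * π ω = t) := by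
      rw [conj_eq_iff]
      exact eq_comm
    refine Prod.ext ?_ ?_
    · show s i * (π ω * t * (π ω)⁻¹) * s i = π (i :: ω) * t * (π (i :: ω))⁻¹
      rw [cs.wordProd_cons, mul_inv_rev, cs.inv_simple]
      simp [mul_assoc]
    · show ε + ((cs.rightInvSeq ω).count t : ZMod 2)
          + (if π ω * t * (π ω)⁻¹ = s i then 1 else 0)
        = ε + ((cs.rightInvSeq (i :: ω)).count t : ZMod 2)
      rw [hris, List.count_cons, if_congr hcond rfl rfl]
      push_cast
      rw [add_assoc]
      simp [beq_iff_eq]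
  
lemma count_invariance {ω ω' : List B} (h : π ω = π ω') (t : W) :
    ((cs.rightInvSeq ω).count t : ZMod 2) = ((cs.rightInvSeq ω').count t : ZMod 2) := by
  have h1 := phi0_wordProd cs ω t 0
  have h2 := phi0_wordProd cs ω' t 0
  rw [h] at h1
  rw [h1] at h2
  have := (Prod.mk.injEq _ _ _ _).mp h2 |>.2
  rwa [zero_add, zero_add] at this

lemma count_eq_one {w : W} {i : B} (hlt : cs.length (w * s i) < cs.length w)
    {ω : List B} (hω : π ω = w) :
    ((cs.rightInvSeq ω).count (s i) : ZMod 2) = 1 := by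
  obtain ⟨σ, hσred, hσ⟩ := cs.exists_reduced_word' (w * s i)
  have hnot : s i ∉ cs.rightInvSeq σ := by
    intro hmem
    have h := (cs.isRightInversion_of_mem_rightInvSeq hσred hmem).2
    rw [← hσ] at h
    rw [mul_assoc, cs.simple_mul_simple_self, mul_one] at h
    exact absurd hlt (lt_asymm h)
  have hcnt0 : (cs.rightInvSeq σ).count (s i) = 0 := List.count_eq_zero.mpr hnot
  have hw' : π (σ.concat i) = w := by
    rw [cs.wordProd_concat, ← hσ, mul_assoc, cs.simple_mul_simple_self, mul_one]
  rw [count_invariance cs (hω.trans hw'.symm) (s i)]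
  rw [cs.rightInvSeq_concat]
  have hmap : (List.map (⇑(MulAut.conj (s i))) (cs.rightInvSeq σ)).count (s i) = 0 := by
    rw [List.count_eq_zero]
    intro hmem
    obtain ⟨a, ha, hfa⟩ := List.mem_map.mp hmem
    have : a = s i := by
      have := hfa
      simp only [MulAut.conj_apply, cs.inv_simple] at this
      have h2 := congrArg (fun z => s i * z * s i) this
      simpa [mul_assoc, cs.simple_mul_simple_self, cs.simple_mul_simple_cancel_left]
        using h2
    rw [this] at ha
    exact hnot ha
  rw [List.concat_eq_append, List.count_append, hmap, List.count_singleton]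
  norm_num

lemma exchange {w : W} {i : B} (hlt : cs.length (w * s i) < cs.length w)
    {ω : List B} (hω : π ω = w) :
    ∃ j, j < ω.length ∧ π (ω.eraseIdx j) = w * s i := by
  have h1 := count_eq_one cs hlt hω
  have hne : (cs.rightInvSeq ω).count (s i) ≠ 0 := by
    intro h0
    rw [h0] at h1
    exact absurd h1 (by decide)
  have hmem : s i ∈ cs.rightInvSeq ω := by
    by_contra hn
    exact hne (List.count_eq_zero.mpr hn)
  obtain ⟨j, hj, hget⟩ := List.mem_iff_getElem.mp hmem
  have hj' : j < ω.length := by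
    have := cs.length_rightInvSeq ω
    omega
  refine ⟨j, hj', ?_⟩
  have hgd := cs.wordProd_mul_getD_rightInvSeq ω j
  rw [List.getD_eq_getElem _ _ hj, hget, hω] at hgd
  exact hgd.symm

omit [DecidableEq W] in
lemma wordProd_mem {A : Set B} {ω : List B} (h : ∀ b ∈ ω, b ∈ A) :
    π ω ∈ Subgroup.closure (cs.simple '' A) := by
  induction ω with
  | nil => rw [cs.wordProd_nil]; exact one_mem _
  | cons i ω ih =>
    rw [cs.wordProd_cons]
    exact mul_mem
      (Subgroup.subset_closure ⟨i, h i (List.mem_cons_self), rfl⟩)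
      (ih fun b hb => h b (List.mem_cons_of_mem i hb))

omit [DecidableEq W] in
lemma exists_word_of_mem {A : Set B} {w : W}
    (hw : w ∈ Subgroup.closure (cs.simple '' A)) :
    ∃ ω : List B, (∀ b ∈ ω, b ∈ A) ∧ π ω = w := by
  induction hw using Subgroup.closure_induction with
  | mem x hx =>
    obtain ⟨b, hb, rfl⟩ := hx
    exact ⟨[b], by simpa using hb, cs.wordProd_singleton b⟩
  | one => exact ⟨[], by simp, cs.wordProd_nil⟩
  | mul x y hx hy ihx ihy =>
    obtain ⟨ωx, hx1, hx2⟩ := ihx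
    obtain ⟨ωy, hy1, hy2⟩ := ihy
    refine ⟨ωx ++ ωy, ?_, by rw [cs.wordProd_append, hx2, hy2]⟩
    intro b hb
    rcases List.mem_append.mp hb with h | h
    · exact hx1 b h
    · exact hy1 b h
  | inv x hx ihx =>
    obtain ⟨ωx, hx1, hx2⟩ := ihx
    refine ⟨ωx.reverse, ?_, by rw [cs.wordProd_reverse, hx2]⟩
    intro b hb
    exact hx1 b (List.mem_reverse.mp hb)

omit [DecidableEq W] in
lemma ris_mem {A : Set B} {ω : List B} (h : ∀ b ∈ ω, b ∈ A) :
    ∀ t ∈ cs.rightInvSeq ω, t ∈ Subgroup.closure (cs.simple '' A) := by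
  induction ω with
  | nil => simp
  | cons i ω ih =>
    intro t ht
    have hris : cs.rightInvSeq (i :: ω)
        = ((π ω)⁻¹ * s i * π ω) :: cs.rightInvSeq ω := rfl
    rw [hris] at ht
    rcases List.mem_cons.mp ht with rfl | ht
    · have hπ : π ω ∈ Subgroup.closure (cs.simple '' A) :=
        wordProd_mem cs (fun b hb => h b (List.mem_cons_of_mem i hb))
      exact mul_mem (mul_mem (inv_mem hπ)
        (Subgroup.subset_closure ⟨i, h i (List.mem_cons_self), rfl⟩)) hπ
    · exact ih (fun b hb => h b (List.mem_cons_of_mem i hb)) t ht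

lemma exists_reduced_sublist :
    ∀ (n : ℕ) (ω : List B), ω.length ≤ n →
      ∃ ω', ω'.Sublist ω ∧ cs.IsReduced ω' ∧ π ω' = π ω := by
  intro n
  induction n with
  | zero =>
    intro ω hω
    have : ω = [] := List.eq_nil_of_length_eq_zero (Nat.le_zero.mp hω)
    subst this
    exact ⟨[], List.Sublist.refl _, by simp [CoxeterSystem.IsReduced], rfl⟩
  | succ n ih =>
    intro ω hlen
    by_cases hred : cs.IsReduced ω
    · exact ⟨ω, List.Sublist.refl ω, hred, rfl⟩
    · have hωne : ω ≠ [] := by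
        intro h
        exact hred (by simp [h, CoxeterSystem.IsReduced])
      have hωlen : 1 ≤ ω.length := by
        cases ω with
        | nil => exact absurd rfl hωne
        | cons a l => simp
      haveI : DecidablePred (fun k => ¬ cs.IsReduced (ω.take (k+1))) := by
        intro k
        unfold CoxeterSystem.IsReduced
        infer_instance
      have hex : ∃ k, ¬ cs.IsReduced (ω.take (k+1)) := by
        refine ⟨ω.length - 1, ?_⟩
        rwa [show ω.length - 1 + 1 = ω.length by omega, List.take_length]
      set K := Nat.find hex with hK
      have hKspec : ¬ cs.IsReduced (ω.take (K+1)) := Nat.find_spec hex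
      have hKlt : K < ω.length := by
        have : K ≤ ω.length - 1 := Nat.find_min' hex (by
          rwa [show ω.length - 1 + 1 = ω.length by omega, List.take_length])
        omega
      have hredK : cs.IsReduced (ω.take K) := by
        rcases Nat.eq_zero_or_pos K with h0 | hKpos
        · rw [h0, List.take_zero]
          simp [CoxeterSystem.IsReduced]
        · have := Nat.find_min hex (show K - 1 < K by omega)
          rw [not_not] at this
          rwa [show K - 1 + 1 = K by omega] at this
      set a : B := ω[K] with ha
      have htake : ω.take (K+1) = ω.take K ++ [a] := by
        rw [List.take_succ, ha]
        congr 1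
        rw [List.getElem?_eq_getElem hKlt]
        rfl
      have hπtake : π (ω.take (K+1)) = π (ω.take K) * s a := by
        rw [htake, cs.wordProd_append, cs.wordProd_singleton]
      have hlenK : (ω.take K).length = K := by
        rw [List.length_take]
        omega
      have hlK : cs.length (π (ω.take K)) = K := by
        have := hredK
        unfold CoxeterSystem.IsReduced at this
        rw [this, hlenK]
      have hlt' : cs.length (π (ω.take K) * s a) < cs.length (π (ω.take K)) := by
        rcases cs.length_mul_simple (π (ω.take K)) a with h | h
        · exfalso
          apply hKspec
          unfold CoxeterSystem.IsReduced
          rw [hπtake, h, hlK, List.length_take]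
          omega
        · omega
      obtain ⟨j, hj, hej⟩ := exchange cs hlt' rfl
      set ω'' : List B := (ω.take K).eraseIdx j ++ ω.drop (K+1) with hω''
      have hπ'' : π ω'' = π ω := by
        rw [hω'', cs.wordProd_append, hej, ← hπtake, ← cs.wordProd_append,
          List.take_append_drop]
      have hsub : ω''.Sublist ω := by
        have h1 : ((ω.take K).eraseIdx j).Sublist (ω.take K) := List.eraseIdx_sublist _ j
        have h2 : (ω.drop (K+1)).Sublist (ω.drop K) := by
          rw [← List.drop_drop, List.drop_one]
          exact List.tail_sublist _
        calc ω'' = (ω.take K).eraseIdx j ++ ω.drop (K+1) := rfl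
          _ <+ ω.take K ++ ω.drop K := List.Sublist.append h1 h2
          _ = ω := List.take_append_drop K ω
      have hlen'' : ω''.length ≤ n := by
        rw [hω'', List.length_append]
        have hje : ((ω.take K).eraseIdx j).length = K - 1 := by
          rw [List.length_eraseIdx, if_pos (by omega : j < (ω.take K).length), hlenK]
        rw [hje, List.length_drop]
        omega
      obtain ⟨ω₃, hs3, hr3, hp3⟩ := ih ω'' hlen''
      exact ⟨ω₃, hs3.trans hsub, hr3, hp3.trans hπ''⟩


lemma simple_not_mem {α : B} :
    s α ∉ Subgroup.closure (cs.simple '' {i : B | i ≠ α}) := by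
  intro hmem
  obtain ⟨ω, hP, hπ⟩ := exists_word_of_mem cs hmem
  obtain ⟨ω', hsub, hred, hπ'⟩ := exists_reduced_sublist cs ω.length ω le_rfl
  have hl1 : ω'.length = 1 := by
    have h := hred
    unfold CoxeterSystem.IsReduced at h
    rw [hπ', hπ, cs.length_simple] at h
    omega
  obtain ⟨b, rfl⟩ := List.length_eq_one_iff.mp hl1
  have hb : cs.simple b = cs.simple α := by
    rw [← cs.wordProd_singleton, hπ', hπ]
  have hbne : b ≠ α := hP b (hsub.subset (List.mem_singleton_self b))
  exact hbne (simple_injective M cs hb)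

lemma step_one {α : B} {v : W}
    (hv : v ∈ Subgroup.closure (cs.simple '' {i : B | i ≠ α})) :
    cs.length v < cs.length (v * s α) := by
  rcases cs.length_mul_simple v α with h | h
  · omega
  · exfalso
    have hlt : cs.length (v * s α) < cs.length v := by omega
    obtain ⟨ω, hP, hπ⟩ := exists_word_of_mem cs hv
    have hk := count_eq_one cs hlt hπ
    have hne : (cs.rightInvSeq ω).count (s α) ≠ 0 := by
      intro h0
      rw [h0] at hk
      exact absurd hk (by decide)
    have hmem : s α ∈ cs.rightInvSeq ω := by
      by_contra hn
      exact hne (List.count_eq_zero.mpr hn)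
    exact simple_not_mem cs (ris_mem cs hP (s α) hmem)

end Stmt3Aux

open Stmt3Aux in
theorem stmt3 {B W : Type*} [Group W] {M : CoxeterMatrix B}
    (cs : CoxeterSystem M W) (α : B)
    (w : W)
    (hw_mem : w ∈ Subgroup.closure (cs.simple '' {i : B | i ≠ α}))
    (hw_min : ∀ i : B, i ≠ α → Commute (cs.simple i) (cs.simple α) →
      cs.length w < cs.length (w * cs.simple i)) :
    ∀ i : B, i ≠ α →
      cs.length (w * cs.simple α) < cs.length (w * cs.simple α * cs.simple i) := by
  letI : DecidableEq W := Classical.decEq W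
  intro i hi
  rcases cs.length_mul_simple (w * cs.simple α) i with h | h
  · omega
  · exfalso
    have hlt : cs.length (w * cs.simple α * cs.simple i)
        < cs.length (w * cs.simple α) := by omega
    have hwa : cs.length (w * cs.simple α) = cs.length w + 1 := by
      have h1 := step_one cs hw_mem
      rcases cs.length_mul_simple w α with h2 | h2 <;> omega
    by_cases hc : Commute (cs.simple i) (cs.simple α)
    · -- commuting case
      have hgt : cs.length w < cs.length (w * cs.simple i) := hw_min i hi hc
      have hvmem : w * cs.simple i ∈ Subgroup.closure (cs.simple '' {i : B | i ≠ α}) :=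
        mul_mem hw_mem (Subgroup.subset_closure ⟨i, hi, rfl⟩)
      have h2 : cs.length (w * cs.simple i)
          < cs.length (w * cs.simple i * cs.simple α) := step_one cs hvmem
      have heq : w * cs.simple α * cs.simple i = w * cs.simple i * cs.simple α := by
        rw [mul_assoc, ← hc.eq, ← mul_assoc]
      rw [heq] at hlt
      omega
    · -- non-commuting case
      obtain ⟨ω, hP, hπ⟩ := exists_word_of_mem cs hw_mem
      have hπc : cs.wordProd (ω.concat α) = w * cs.simple α := by
        rw [cs.wordProd_concat, hπ]
      obtain ⟨j, hj, hej⟩ := exchange cs hlt hπc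
      rw [List.length_concat] at hj
      rcases eq_or_lt_of_le (Nat.lt_succ_iff.mp hj) with hjeq | hjlt
      · -- j = ω.length : leads to s i = s α, contradicting non-commutativity
        have herase : (ω.concat α).eraseIdx j = ω := by
          rw [List.concat_eq_append, hjeq, List.eraseIdx_append_of_length_le le_rfl]
          simp
        rw [herase, hπ] at hej
        have h1 : cs.simple α * cs.simple i = 1 := by
          have h2 : w = w * (cs.simple α * cs.simple i) := by
            rw [← mul_assoc, ← hej]
          exact left_eq_mul.mp h2
        have h2 : cs.simple i = cs.simple α := by
          have h3 := eq_inv_of_mul_eq_one_left h1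
          rw [cs.inv_simple] at h3
          exact h3.symm
        apply hc
        rw [h2]
      · -- j < ω.length
        have herase : (ω.concat α).eraseIdx j = (ω.eraseIdx j).concat α := by
          rw [List.concat_eq_append, List.concat_eq_append,
            List.eraseIdx_append_of_lt_length hjlt]
        rw [herase, cs.wordProd_concat] at hej
        have hu : cs.wordProd (ω.eraseIdx j)
            = w * cs.simple α * cs.simple i * cs.simple α := by
          rw [← hej, mul_assoc, cs.simple_mul_simple_self, mul_one]
        have hgmem : cs.simple α * cs.simple i * cs.simple α
            ∈ Subgroup.closure (cs.simple '' {i : B | i ≠ α}) := by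
          have huH : cs.wordProd (ω.eraseIdx j)
              ∈ Subgroup.closure (cs.simple '' {i : B | i ≠ α}) := by
            apply wordProd_mem
            intro b hb
            exact hP b ((List.eraseIdx_sublist ω j).subset hb)
          have heq2 : cs.simple α * cs.simple i * cs.simple α
              = w⁻¹ * cs.wordProd (ω.eraseIdx j) := by
            rw [hu]; group
          rw [heq2]
          exact mul_mem (inv_mem hw_mem) huH
        -- parity contradiction
        obtain ⟨ρ, hρP, hρπ⟩ := exists_word_of_mem cs hgmem
        have h0 : (cs.rightInvSeq ρ).count (cs.simple α) = 0 :=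
          List.count_eq_zero.mpr
            (fun hmem => simple_not_mem cs (ris_mem cs hρP _ hmem))
        have hw3 : cs.wordProd [α, i, α]
            = cs.simple α * cs.simple i * cs.simple α := by
          rw [cs.wordProd_cons, cs.wordProd_cons, cs.wordProd_singleton, ← mul_assoc]
        have hpar := count_invariance cs (hw3.trans hρπ.symm) (cs.simple α)
        rw [h0] at hpar
        have hris3 : cs.rightInvSeq [α, i, α]
            = [(cs.wordProd [i, α])⁻¹ * cs.simple α * cs.wordProd [i, α],
               (cs.wordProd [α])⁻¹ * cs.simple i * cs.wordProd [α],
               (cs.wordProd ([] : List B))⁻¹ * cs.simple α * cs.wordProd []] := rfl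
        have hne1 : cs.simple α * cs.simple i * cs.simple α ≠ cs.simple α := by
          intro hq
          apply hc
          have h2 : cs.simple α * (cs.simple i * cs.simple α) = cs.simple α * 1 := by
            rw [mul_one, ← mul_assoc]; exact hq
          have h3 : cs.simple i * cs.simple α = 1 := mul_left_cancel h2
          have h4 := eq_inv_of_mul_eq_one_left h3
          rw [cs.inv_simple] at h4
          rw [← h4]
        have hne0 : (cs.wordProd [i, α])⁻¹ * cs.simple α * cs.wordProd [i, α]
            ≠ cs.simple α := by
          intro hq
          apply hc
          have hπiα : cs.wordProd [i, α] = cs.simple i * cs.simple α := by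
            rw [cs.wordProd_cons, cs.wordProd_singleton]
          rw [hπiα, mul_inv_rev, cs.inv_simple, cs.inv_simple] at hq
          have h3 : cs.simple α * (cs.simple i * (cs.simple α * cs.simple i)) = 1 := by
            have h2 := congrArg (fun z => z * cs.simple α) hq
            simpa [mul_assoc, cs.simple_mul_simple_self, mul_one] using h2
          have h3' : (cs.simple α * cs.simple i) * (cs.simple α * cs.simple i) = 1 := by
            rw [mul_assoc]; exact h3
          have h4 : (cs.simple α * cs.simple i)⁻¹ = cs.simple α * cs.simple i :=
            inv_eq_of_mul_eq_one_right h3'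
          have h5 : cs.simple i * cs.simple α = (cs.simple α * cs.simple i)⁻¹ := by
            rw [mul_inv_rev, cs.inv_simple, cs.inv_simple]
          show cs.simple i * cs.simple α = cs.simple α * cs.simple i
          rw [h5, h4]
        have hsα : (cs.wordProd ([] : List B))⁻¹ * cs.simple α * cs.wordProd []
            = cs.simple α := by simp
        have hsing : (cs.wordProd [α])⁻¹ * cs.simple i * cs.wordProd [α]
            = cs.simple α * cs.simple i * cs.simple α := by
          rw [cs.wordProd_singleton, cs.inv_simple]
        have hcount : (cs.rightInvSeq [α, i, α]).count (cs.simple α) = 1 := by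
          rw [hris3, hsα, hsing]
          simp [List.count_cons, hne0, hne1]
        rw [hcount] at hpar
        exact absurd hpar (by norm_num)
end

section
/- Let B^{2n}(r) ⊂ ℝ^{2n} be the open ball of radius r with the standard symplectic form. If there exists a tuple (f, g) realizing a symplectic embedding of B^{2n}(r) into B^{2n}(R) endowed with the standard symplectic form, then r ≤ R. Consequently, the Gromov width of the standard ball B^{2n}(R) is at most πR² (and equals πR²). -/
/-!
STATEMENT 17: If the open ball B^{2n}(r) ⊂ ℝ^{2n} (with the standard symplectic
form) embeds symplectically into B^{2n}(R), then r ≤ R.  Consequently the Gromov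
width of the standard ball B^{2n}(R) equals πR² (in particular it is ≤ πR²).
-/

open Sum

noncomputable section

/-- ℝ^{2n} with the Euclidean metric, coordinates (x₁,…,xₙ,y₁,…,yₙ). -/
abbrev R2n (n : ℕ) := EuclideanSpace ℝ (Fin n ⊕ Fin n)

/-- The standard symplectic form ω_st = Σ dxᵢ ∧ dyᵢ. -/
def stdOmegaR (n : ℕ) (u v : R2n n) : ℝ :=
  ∑ i : Fin n, (u (inl i) * v (inr i) - u (inr i) * v (inl i))

/-- `f` realizes a symplectic embedding of `B^{2n}(r)` into `B^{2n}(R)`: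
it is injective and differentiable on the ball of radius `r`, maps it into the ball
of radius `R`, and its derivative preserves the standard symplectic form. -/
def IsSymplecticEmbedding (n : ℕ) (f : R2n n → R2n n) (r R : ℝ) : Prop :=
  Set.InjOn f (Metric.ball 0 r) ∧
  (∀ x ∈ Metric.ball (0 : R2n n) r, f x ∈ Metric.ball (0 : R2n n) R) ∧
  (∀ x ∈ Metric.ball (0 : R2n n) r, DifferentiableAt ℝ f x ∧
    ∀ u v : R2n n, stdOmegaR n (fderiv ℝ f x u) (fderiv ℝ f x v) = stdOmegaR n u v)

/-- The matrix of the standard symplectic form. -/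
def Jmat (n : ℕ) : Matrix (Fin n ⊕ Fin n) (Fin n ⊕ Fin n) ℝ :=
  Matrix.fromBlocks 0 1 (-1) 0

lemma omega_eq_sum (n : ℕ) (u v : R2n n) :
    stdOmegaR n u v = ∑ a, ∑ c, u a * (Jmat n a c * v c) := by
  simp [stdOmegaR, Jmat, Fintype.sum_sum_type, Matrix.one_apply, mul_ite,
    Finset.sum_ite_eq, Finset.sum_ite_eq', Finset.sum_sub_distrib, mul_comm, sub_eq_add_neg,
    Finset.sum_add_distrib, Finset.sum_neg_distrib]
  ring

/-- A linear map preserving the standard symplectic form has `|det| = 1`. -/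
lemma symp_abs_det (n : ℕ) (hn : 0 < n) (A : R2n n →L[ℝ] R2n n)
    (hA : ∀ u v : R2n n, stdOmegaR n (A u) (A v) = stdOmegaR n u v) :
    |A.det| = 1 := by
  classical
  set b := (EuclideanSpace.basisFun (Fin n ⊕ Fin n) ℝ).toBasis with hb
  set M := LinearMap.toMatrix b b (A : R2n n →ₗ[ℝ] R2n n) with hMdef
  have hM : ∀ a k, M a k = A (EuclideanSpace.basisFun (Fin n ⊕ Fin n) ℝ k) a := by
    intro a k
    simp [hMdef, LinearMap.toMatrix_apply, hb, EuclideanSpace.basisFun_repr]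
  have hbase : ∀ a k : Fin n ⊕ Fin n,
      (EuclideanSpace.basisFun (Fin n ⊕ Fin n) ℝ k : R2n n) a = if a = k then 1 else 0 := by
    intro a k
    simp [EuclideanSpace.basisFun_apply, EuclideanSpace.single_apply]
  have key : M.transpose * Jmat n * M = Jmat n := by
    ext k l
    have h := hA (EuclideanSpace.basisFun (Fin n ⊕ Fin n) ℝ k)
      (EuclideanSpace.basisFun (Fin n ⊕ Fin n) ℝ l)
    rw [omega_eq_sum, omega_eq_sum] at h
    have hL : ∑ a, ∑ c,
        (A (EuclideanSpace.basisFun (Fin n ⊕ Fin n) ℝ k) : R2n n) a *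
          (Jmat n a c * (A (EuclideanSpace.basisFun (Fin n ⊕ Fin n) ℝ l) : R2n n) c)
        = (M.transpose * Jmat n * M) k l := by
      simp only [Matrix.mul_apply, Matrix.transpose_apply, hM]
      rw [Finset.sum_comm]
      congr 1; ext c
      rw [Finset.sum_mul]
      congr 1; ext a
      ring
    have hR : ∑ a, ∑ c,
        (EuclideanSpace.basisFun (Fin n ⊕ Fin n) ℝ k : R2n n) a *
          (Jmat n a c * (EuclideanSpace.basisFun (Fin n ⊕ Fin n) ℝ l : R2n n) c)
        = Jmat n k l := by
      simp [hbase, mul_ite, Finset.sum_ite_eq', Finset.sum_ite_eq]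
    rw [hL, hR] at h
    exact h
  have hJJ : Jmat n * Jmat n = -1 := by
    simp only [Jmat, Matrix.fromBlocks_multiply, ← Matrix.fromBlocks_one,
      Matrix.fromBlocks_neg]
    norm_num
  have hdetJ : (Jmat n).det ^ 2 = 1 := by
    have := congrArg Matrix.det hJJ
    rw [Matrix.det_mul, Matrix.det_neg, Matrix.det_one] at this
    simpa [sq, Fintype.card_sum, Even.neg_one_pow (⟨n, by ring⟩ : Even (n + n))] using this
  have hdetJ0 : (Jmat n).det ≠ 0 := by
    intro h0; rw [h0] at hdetJ; norm_num at hdetJ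
  have hdetM : M.det * M.det = 1 := by
    have := congrArg Matrix.det key
    rw [Matrix.det_mul, Matrix.det_mul, Matrix.det_transpose] at this
    have h2 : M.det * M.det * (Jmat n).det = 1 * (Jmat n).det := by
      rw [one_mul]; linear_combination this
    exact mul_right_cancel₀ hdetJ0 h2
  have hAdet : A.det = M.det := by
    rw [ContinuousLinearMap.det, ← LinearMap.det_toMatrix b]
  rw [hAdet]
  rcases mul_self_eq_one_iff.mp hdetM with h | h <;> rw [h] <;> norm_num

open MeasureTheory in
/-- The key inequality: a symplectic embedding of `B(r)` into `B(R)` forces `r ≤ R`,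
by the volume argument (symplectic maps have Jacobian of absolute value 1). -/
lemma radius_le (n : ℕ) (hn : 0 < n) (r R : ℝ) (hr : 0 < r) (hR : 0 < R)
    (hemb : ∃ f : R2n n → R2n n, IsSymplecticEmbedding n f r R) : r ≤ R := by
  obtain ⟨f, hinj, hmap, hdiff⟩ := hemb
  haveI : Nonempty (Fin n) := ⟨⟨0, hn⟩⟩
  haveI : Nontrivial (R2n n) := inferInstance
  set s := Metric.ball (0 : R2n n) r with hs_def
  have hs : MeasurableSet s := measurableSet_ball
  have hf' : ∀ x ∈ s, HasFDerivWithinAt f (fderiv ℝ f x) s x := fun x hx =>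
    ((hdiff x hx).1.hasFDerivAt).hasFDerivWithinAt
  have him : volume (f '' s) = volume s := by
    rw [← lintegral_abs_det_fderiv_eq_addHaar_image volume hs hf' hinj]
    rw [setLIntegral_congr_fun_ae hs (Filter.Eventually.of_forall fun x hx => by
      rw [symp_abs_det n hn _ (hdiff x hx).2, ENNReal.ofReal_one] :
        ∀ᵐ x ∂volume, x ∈ s → ENNReal.ofReal |(fderiv ℝ f x).det| = (fun _ => 1) x)]
    simp
  have hle : volume s ≤ volume (Metric.ball (0 : R2n n) R) := by
    rw [← him]
    exact measure_mono (Set.image_subset_iff.mpr hmap)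
  rw [Measure.addHaar_ball volume _ hr.le, Measure.addHaar_ball volume _ hR.le] at hle
  have hc0 : volume (Metric.ball (0 : R2n n) 1) ≠ 0 :=
    (Metric.measure_ball_pos volume _ one_pos).ne'
  have hct : volume (Metric.ball (0 : R2n n) 1) ≠ ⊤ := measure_ball_lt_top.ne
  have hpow : ENNReal.ofReal (r ^ Module.finrank ℝ (R2n n)) ≤
      ENNReal.ofReal (R ^ Module.finrank ℝ (R2n n)) :=
    (ENNReal.mul_le_mul_iff_left hc0 hct).mp hle
  have hpow' : r ^ Module.finrank ℝ (R2n n) ≤ R ^ Module.finrank ℝ (R2n n) := by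
    have := (ENNReal.ofReal_le_ofReal_iff (by positivity)).mp hpow
    exact this
  have hd : Module.finrank ℝ (R2n n) ≠ 0 := by
    rw [finrank_euclideanSpace, Fintype.card_sum, Fintype.card_fin]
    omega
  exact (pow_le_pow_iff_left₀ hr.le hR.le hd).mp hpow'

theorem stmt17 (n : ℕ) (hn : 0 < n) (r R : ℝ) (hr : 0 < r) (hR : 0 < R)
    (hemb : ∃ f : R2n n → R2n n, IsSymplecticEmbedding n f r R) :
    r ≤ R ∧
    sSup {A : ℝ | ∃ ρ : ℝ, 0 < ρ ∧
        (∃ f : R2n n → R2n n, IsSymplecticEmbedding n f ρ R) ∧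
        A = Real.pi * ρ ^ 2}
      = Real.pi * R ^ 2 := by
  refine ⟨radius_le n hn r R hr hR hemb, ?_⟩
  have hid : IsSymplecticEmbedding n id R R := by
    refine ⟨fun x _ y _ h => h, fun x hx => hx, fun x hx => ⟨differentiableAt_id, ?_⟩⟩
    intro u v
    rw [fderiv_id]
    rfl
  have hmem : Real.pi * R ^ 2 ∈ {A : ℝ | ∃ ρ : ℝ, 0 < ρ ∧
      (∃ f : R2n n → R2n n, IsSymplecticEmbedding n f ρ R) ∧ A = Real.pi * ρ ^ 2} :=
    ⟨R, hR, ⟨id, hid⟩, rfl⟩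
  have hub : ∀ A ∈ {A : ℝ | ∃ ρ : ℝ, 0 < ρ ∧
      (∃ f : R2n n → R2n n, IsSymplecticEmbedding n f ρ R) ∧ A = Real.pi * ρ ^ 2},
      A ≤ Real.pi * R ^ 2 := by
    rintro A ⟨ρ, hρ, hembρ, rfl⟩
    have hρR := radius_le n hn ρ R hρ hR hembρ
    have : ρ ^ 2 ≤ R ^ 2 := pow_le_pow_left₀ hρ.le hρR 2
    exact mul_le_mul_of_nonneg_left this Real.pi_pos.le
  exact le_antisymm (csSup_le ⟨_, hmem⟩ hub) (le_csSup ⟨_, hub⟩ hmem)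

end
end
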